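/- Let a and b be noncrossing matchings of type (n-k,k) such that in the one-manifold aw(b) (formed by reflecting b and gluing it to a) every line segment has one endpoint pointing up and one pointing down. Enumerating the rays of a from left to right as i_1,…,i_{n-2k} and the rays of b as j_1,…,j_{n-2k}, each line segment of aw(b) contains the rays i_t and j_t for some common index t. -/

import Mathlib

/-- A noncrossing matching of type `(n-k, k)`: `k` pairwise-noncrossing arcs above a
horizontal line of `n` vertices (labelled `1,…,n`); the remaining `n-2k` vertices carry
rays, and no ray lies beneath an arc (every vertex strictly between the endpoints of an
arc is an endpoint of some arc). -/
structure NCMatching (n k : ℕ) where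
  arcs : Finset (ℕ × ℕ)
  card_arcs : arcs.card = k
  mem_range : ∀ p ∈ arcs, 1 ≤ p.1 ∧ p.1 < p.2 ∧ p.2 ≤ n
  endpoints_distinct : ∀ p ∈ arcs, ∀ q ∈ arcs, p ≠ q →
    p.1 ≠ q.1 ∧ p.1 ≠ q.2 ∧ p.2 ≠ q.1 ∧ p.2 ≠ q.2
  noncross : ∀ p ∈ arcs, ∀ q ∈ arcs, ¬ (p.1 < q.1 ∧ q.1 < p.2 ∧ p.2 < q.2)
  no_ray_under : ∀ p ∈ arcs, ∀ r, p.1 < r → r < p.2 → ∃ q ∈ arcs, r = q.1 ∨ r = q.2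

/-- Vertex `i` carries a ray of the matching `m`. -/
def NCMatching.IsRay {n k : ℕ} (m : NCMatching n k) (i : ℕ) : Prop :=
  1 ≤ i ∧ i ≤ n ∧ ∀ p ∈ m.arcs, p.1 ≠ i ∧ p.2 ≠ i

/-- The adjacency relation on vertices coming from the glued one-manifold `a w(b)`:
two vertices are related if an arc of `a` or an arc of (the reflection of) `b` joins them. -/
def glueRel {n k : ℕ} (a b : NCMatching n k) (i j : ℕ) : Prop :=
  (i, j) ∈ a.arcs ∨ (j, i) ∈ a.arcs ∨ (i, j) ∈ b.arcs ∨ (j, i) ∈ b.arcs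

/-- Two vertices lie on the same connected component of `a w(b)`. -/
def Conn {n k : ℕ} (a b : NCMatching n k) : ℕ → ℕ → Prop :=
  Relation.ReflTransGen (glueRel a b)

/-- `b ∈ B_a^{n-k,k}`: every line segment of `a w(b)` has endpoints pointing in opposite
directions, i.e. no component of `a w(b)` contains two distinct rays of `a`, nor two
distinct rays of `b`. -/
def InBa {n k : ℕ} (a b : NCMatching n k) : Prop :=
  (∀ i j, a.IsRay i → a.IsRay j → i ≠ j → ¬ Conn a b i j) ∧
  (∀ i j, b.IsRay i → b.IsRay j → i ≠ j → ¬ Conn a b i j)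

namespace RayIdxAux

noncomputable def indZ (P : Prop) : ZMod 2 := @ite _ P (Classical.propDecidable P) 1 0

lemma indZ_pos {P : Prop} (h : P) : indZ P = 1 := by simp [indZ, h]
lemma indZ_neg {P : Prop} (h : ¬ P) : indZ P = 0 := by simp [indZ, h]

lemma indZ_congr {P Q : Prop} (h : P ↔ Q) : indZ P = indZ Q := by
  by_cases hP : P
  · rw [indZ_pos hP, indZ_pos (h.mp hP)]
  · rw [indZ_neg hP, indZ_neg (fun hq => hP (h.mpr hq))]

lemma indZ_inj {P Q : Prop} (h : indZ P = indZ Q) : P ↔ Q := by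
  by_cases hP : P <;> by_cases hQ : Q
  · exact iff_of_true hP hQ
  · rw [indZ_pos hP, indZ_neg hQ] at h; exact absurd h one_ne_zero
  · rw [indZ_neg hP, indZ_pos hQ] at h; exact absurd h.symm one_ne_zero
  · exact iff_of_false hP hQ

lemma sum_indZ_eq (S : Finset ℕ) (x : ℕ) : (∑ u ∈ S, indZ (x = u)) = indZ (x ∈ S) := by
  classical
  have h : ∀ u ∈ S, indZ (x = u) = if x = u then (1 : ZMod 2) else 0 := by
    intro u _; by_cases h : x = u <;> simp [indZ_pos, indZ_neg, h]
  rw [Finset.sum_congr rfl h, Finset.sum_ite_eq]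
  by_cases h : x ∈ S <;> simp [h, indZ_pos, indZ_neg]

noncomputable def degSum (E : Finset (ℕ × ℕ)) (u : ℕ) : ZMod 2 :=
  ∑ p ∈ E, (indZ (p.1 = u) + indZ (p.2 = u))

lemma sum_degSum (E : Finset (ℕ × ℕ)) (S : Finset ℕ) :
    ∑ u ∈ S, degSum E u = ∑ p ∈ E, (indZ (p.1 ∈ S) + indZ (p.2 ∈ S)) := by
  unfold degSum
  rw [Finset.sum_comm]
  refine Finset.sum_congr rfl fun p _ => ?_
  rw [Finset.sum_add_distrib, sum_indZ_eq, sum_indZ_eq]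

lemma indZ_span {x y v : ℕ} (hxy : x < y) (hvx : v ≠ x) (hvy : v ≠ y) :
    indZ (x < v ∧ v < y) = indZ (x < v) + indZ (y < v) := by
  by_cases h1 : x < v <;> by_cases h2 : y < v
  · rw [indZ_pos h1, indZ_pos h2, indZ_neg (by omega : ¬ (x < v ∧ v < y))]; decide
  · rw [indZ_pos h1, indZ_neg h2, indZ_pos ⟨h1, by omega⟩, add_zero]
  · omega
  · rw [indZ_neg h1, indZ_neg h2, indZ_neg (by omega : ¬ (x < v ∧ v < y)), add_zero]

end RayIdxAux

namespace RayIdxAux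

variable {n k : ℕ}

lemma arc_lt (m : NCMatching n k) {p : ℕ × ℕ} (hp : p ∈ m.arcs) : p.1 < p.2 :=
  (m.mem_range p hp).2.1

lemma ray_or_arc (m : NCMatching n k) {u : ℕ} (h1 : 1 ≤ u) (h2 : u ≤ n) :
    m.IsRay u ∨ ∃ p ∈ m.arcs, p.1 = u ∨ p.2 = u := by
  by_cases h : ∃ p ∈ m.arcs, p.1 = u ∨ p.2 = u
  · exact Or.inr h
  · push_neg at h
    exact Or.inl ⟨h1, h2, fun p hp => by have := h p hp; tauto⟩

lemma ray_not_under (m : NCMatching n k) {p : ℕ × ℕ} (hp : p ∈ m.arcs) {r : ℕ}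
    (hr : m.IsRay r) : ¬ (p.1 < r ∧ r < p.2) := by
  rintro ⟨h1, h2⟩
  obtain ⟨q, hq, hq'⟩ := m.no_ray_under p hp r h1 h2
  have := hr.2.2 q hq; omega

lemma span_iff (m : NCMatching n k) {r p : ℕ × ℕ} (hr : r ∈ m.arcs) (hp : p ∈ m.arcs)
    (hne : r ≠ p) : (r.1 < p.1 ∧ p.1 < r.2) ↔ (r.1 < p.2 ∧ p.2 < r.2) := by
  obtain ⟨d1, d2, d3, d4⟩ := m.endpoints_distinct r hr p hp hne
  have h1 := (m.mem_range r hr).2.1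
  have h2 := (m.mem_range p hp).2.1
  have n1 := m.noncross r hr p hp
  have n2 := m.noncross p hp r hr
  omega

lemma degSum_eq_zero (m : NCMatching n k) {u : ℕ}
    (h : ∀ p ∈ m.arcs, p.1 ≠ u ∧ p.2 ≠ u) : degSum m.arcs u = 0 :=
  Finset.sum_eq_zero fun p hp => by
    rw [indZ_neg (h p hp).1, indZ_neg (h p hp).2, add_zero]

lemma degSum_eq_one (m : NCMatching n k) {u : ℕ} {p0 : ℕ × ℕ} (hp0 : p0 ∈ m.arcs)
    (h : p0.1 = u ∨ p0.2 = u) : degSum m.arcs u = 1 := by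
  unfold degSum
  rw [Finset.sum_eq_single p0]
  · have := arc_lt m hp0
    rcases h with h | h
    · rw [indZ_pos h, indZ_neg (by omega), add_zero]
    · rw [indZ_pos h, indZ_neg (by omega), zero_add]
  · intro q hq hne
    have hd := m.endpoints_distinct q hq p0 hp0 hne
    rw [indZ_neg (by omega), indZ_neg (by omega), add_zero]
  · intro hn; exact absurd hp0 hn

lemma glueRel_symm {a b : NCMatching n k} {u v : ℕ} (h : glueRel a b u v) :
    glueRel a b v u := by unfold glueRel at *; tauto

lemma conn_symm {a b : NCMatching n k} {u v : ℕ} (h : Conn a b u v) : Conn a b v u :=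
  (@Relation.ReflTransGen.stdSymm _ _ ⟨fun _ _ h => glueRel_symm h⟩).symm _ _ h

lemma conn_trans {a b : NCMatching n k} {u v w : ℕ} (h1 : Conn a b u v)
    (h2 : Conn a b v w) : Conn a b u w := Relation.ReflTransGen.trans h1 h2

lemma glueRel_bound {a b : NCMatching n k} {u v : ℕ} (h : glueRel a b u v) :
    1 ≤ v ∧ v ≤ n := by
  rcases h with h | h | h | h
  · have := a.mem_range _ h; simp at this; omega
  · have := a.mem_range _ h; simp at this; omega
  · have := b.mem_range _ h; simp at this; omega
  · have := b.mem_range _ h; simp at this; omega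

lemma conn_bound {a b : NCMatching n k} {u v : ℕ} (hu : 1 ≤ u ∧ u ≤ n)
    (h : Conn a b u v) : 1 ≤ v ∧ v ≤ n := by
  induction h with
  | refl => exact hu
  | tail _ hstep _ => exact glueRel_bound hstep

lemma conn_of_mem_a {a b : NCMatching n k} {p : ℕ × ℕ} (hp : p ∈ a.arcs) :
    Conn a b p.1 p.2 :=
  Relation.ReflTransGen.single (Or.inl (by rwa [show (p.1, p.2) = p from rfl]))

lemma conn_of_mem_b {a b : NCMatching n k} {p : ℕ × ℕ} (hp : p ∈ b.arcs) :
    Conn a b p.1 p.2 :=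
  Relation.ReflTransGen.single (Or.inr (Or.inr (Or.inl (by rwa [show (p.1, p.2) = p from rfl]))))

lemma conn_swap {a b : NCMatching n k} {u v : ℕ} (h : Conn a b u v) : Conn b a u v :=
  Relation.ReflTransGen.mono (r := glueRel a b) (p := glueRel b a)
    (fun x y hxy => by unfold glueRel at *; tauto) u v h

lemma inBa_swap {a b : NCMatching n k} (hab : InBa a b) : InBa b a :=
  ⟨fun i j h1 h2 h3 hc => hab.2 i j h1 h2 h3 (conn_swap hc),
   fun i j h1 h2 h3 hc => hab.1 i j h1 h2 h3 (conn_swap hc)⟩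

lemma exists_partner {a b : NCMatching n k} (hab : InBa a b) {i : ℕ} (hi : a.IsRay i) :
    ∃ j, b.IsRay j ∧ Conn a b i j := by
  classical
  by_contra hno
  push_neg at hno
  set C : Finset ℕ := (Finset.range (n + 1)).filter (fun v => Conn a b i v) with hC
  have hmem : ∀ v, v ∈ C ↔ Conn a b i v := by
    intro v
    simp only [hC, Finset.mem_filter, Finset.mem_range]
    constructor
    · exact And.right
    · intro h
      exact ⟨by have := conn_bound ⟨hi.1, hi.2.1⟩ h; omega, h⟩
  have hiC : i ∈ C := (hmem i).mpr Relation.ReflTransGen.refl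
  have way2 : ∑ u ∈ C, (degSum a.arcs u + degSum b.arcs u) = 0 := by
    rw [Finset.sum_add_distrib, sum_degSum, sum_degSum]
    rw [Finset.sum_eq_zero, Finset.sum_eq_zero, add_zero]
    · intro p hp
      have hcl : p.1 ∈ C ↔ p.2 ∈ C := by
        rw [hmem, hmem]
        constructor
        · exact fun h => conn_trans h (conn_of_mem_b hp)
        · exact fun h => conn_trans h (conn_symm (conn_of_mem_b hp))
      by_cases h : p.1 ∈ C
      · rw [indZ_pos h, indZ_pos (hcl.mp h)]; decide
      · rw [indZ_neg h, indZ_neg (fun h2 => h (hcl.mpr h2)), add_zero]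
    · intro p hp
      have hcl : p.1 ∈ C ↔ p.2 ∈ C := by
        rw [hmem, hmem]
        constructor
        · exact fun h => conn_trans h (conn_of_mem_a hp)
        · exact fun h => conn_trans h (conn_symm (conn_of_mem_a hp))
      by_cases h : p.1 ∈ C
      · rw [indZ_pos h, indZ_pos (hcl.mp h)]; decide
      · rw [indZ_neg h, indZ_neg (fun h2 => h (hcl.mpr h2)), add_zero]
  have way1 : ∑ u ∈ C, (degSum a.arcs u + degSum b.arcs u) = 1 := by
    rw [Finset.sum_eq_single i]
    · have ha : degSum a.arcs i = 0 := degSum_eq_zero a hi.2.2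
      have hbnr : ¬ b.IsRay i := fun h => hno i h Relation.ReflTransGen.refl
      have hb : degSum b.arcs i = 1 := by
        rcases ray_or_arc b hi.1 hi.2.1 with h | ⟨p, hp, hp'⟩
        · exact absurd h hbnr
        · exact degSum_eq_one b hp hp'
      rw [ha, hb, zero_add]
    · intro u huC hne
      have hcu : Conn a b i u := (hmem u).mp huC
      have hbd := conn_bound ⟨hi.1, hi.2.1⟩ hcu
      have ha : degSum a.arcs u = 1 := by
        rcases ray_or_arc a hbd.1 hbd.2 with h | ⟨p, hp, hp'⟩
        · exact absurd hcu (hab.1 i u hi h (Ne.symm hne))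
        · exact degSum_eq_one a hp hp'
      have hb : degSum b.arcs u = 1 := by
        rcases ray_or_arc b hbd.1 hbd.2 with h | ⟨p, hp, hp'⟩
        · exact absurd hcu (hno u h)
        · exact degSum_eq_one b hp hp'
      rw [ha, hb]; decide
    · intro h; exact absurd hiC h
  rw [way1] at way2
  exact one_ne_zero way2


open Classical in
noncomputable def EaF (a b : NCMatching n k) (i : ℕ) : Finset (ℕ × ℕ) :=
  a.arcs.filter (fun p => Conn a b i p.1)

open Classical in
noncomputable def EbF (a b : NCMatching n k) (i : ℕ) : Finset (ℕ × ℕ) :=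
  b.arcs.filter (fun p => Conn a b i p.1)

noncomputable def suF (a b : NCMatching n k) (i v : ℕ) : ZMod 2 :=
  ∑ p ∈ EaF a b i, indZ (p.1 < v ∧ v < p.2)

noncomputable def sdF (a b : NCMatching n k) (i v : ℕ) : ZMod 2 :=
  ∑ p ∈ EbF a b i, indZ (p.1 < v ∧ v < p.2)

noncomputable def sF (a b : NCMatching n k) (i v : ℕ) : ZMod 2 :=
  suF a b i v + indZ (i < v)

lemma mem_EaF {a b : NCMatching n k} {i : ℕ} {p : ℕ × ℕ} :
    p ∈ EaF a b i ↔ p ∈ a.arcs ∧ Conn a b i p.1 := by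
  classical
  simp [EaF]

lemma mem_EbF {a b : NCMatching n k} {i : ℕ} {p : ℕ × ℕ} :
    p ∈ EbF a b i ↔ p ∈ b.arcs ∧ Conn a b i p.1 := by
  classical
  simp [EbF]

lemma zmod2_swap : ∀ x y A B : ZMod 2, x + y = A + B → x + A = y + B := by decide

/-- Fact B: the crossing-parity identity for vertices outside the component of `i`. -/
lemma factB {a b : NCMatching n k} (hab : InBa a b) {i j : ℕ}
    (hi : a.IsRay i) (hj : b.IsRay j) (hconn : Conn a b i j)
    {v : ℕ} (hv : ¬ Conn a b i v) :
    suF a b i v + sdF a b i v = indZ (i < v) + indZ (j < v) := by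
  classical
  set S : Finset ℕ := (Finset.range (n + 1)).filter (fun u => Conn a b i u ∧ u < v) with hS
  have hSmem : ∀ u, u ∈ S ↔ (Conn a b i u ∧ u < v) := by
    intro u
    simp only [hS, Finset.mem_filter, Finset.mem_range]
    constructor
    · exact And.right
    · intro h
      exact ⟨by have := conn_bound ⟨hi.1, hi.2.1⟩ h.1; omega, h⟩
  have hsu : suF a b i v = ∑ p ∈ EaF a b i, (indZ (p.1 ∈ S) + indZ (p.2 ∈ S)) := by
    refine Finset.sum_congr rfl fun p hp => ?_
    obtain ⟨hpa, hpc⟩ := mem_EaF.mp hp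
    have hpc2 : Conn a b i p.2 := conn_trans hpc (conn_of_mem_a hpa)
    have hv1 : v ≠ p.1 := fun h => hv (h ▸ hpc)
    have hv2 : v ≠ p.2 := fun h => hv (h ▸ hpc2)
    rw [indZ_span (arc_lt a hpa) hv1 hv2]
    congr 1
    · exact indZ_congr (by rw [hSmem]; tauto)
    · exact indZ_congr (by rw [hSmem]; tauto)
  have hsd : sdF a b i v = ∑ p ∈ EbF a b i, (indZ (p.1 ∈ S) + indZ (p.2 ∈ S)) := by
    refine Finset.sum_congr rfl fun p hp => ?_
    obtain ⟨hpa, hpc⟩ := mem_EbF.mp hp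
    have hpc2 : Conn a b i p.2 := conn_trans hpc (conn_of_mem_b hpa)
    have hv1 : v ≠ p.1 := fun h => hv (h ▸ hpc)
    have hv2 : v ≠ p.2 := fun h => hv (h ▸ hpc2)
    rw [indZ_span (arc_lt b hpa) hv1 hv2]
    congr 1
    · exact indZ_congr (by rw [hSmem]; tauto)
    · exact indZ_congr (by rw [hSmem]; tauto)
  have hdegA : ∀ u ∈ S, degSum (EaF a b i) u = degSum a.arcs u := by
    intro u huS
    have huc : Conn a b i u := ((hSmem u).mp huS).1
    unfold degSum EaF
    refine Finset.sum_filter_of_ne fun p hp hne => ?_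
    by_cases h1 : p.1 = u
    · exact h1 ▸ huc
    · by_cases h2 : p.2 = u
      · exact conn_trans (h2 ▸ huc) (conn_symm (conn_of_mem_a hp))
      · rw [indZ_neg h1, indZ_neg h2, add_zero] at hne; exact absurd rfl hne
  have hdegB : ∀ u ∈ S, degSum (EbF a b i) u = degSum b.arcs u := by
    intro u huS
    have huc : Conn a b i u := ((hSmem u).mp huS).1
    unfold degSum EbF
    refine Finset.sum_filter_of_ne fun p hp hne => ?_
    by_cases h1 : p.1 = u
    · exact h1 ▸ huc
    · by_cases h2 : p.2 = u
      · exact conn_trans (h2 ▸ huc) (conn_symm (conn_of_mem_b hp))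
      · rw [indZ_neg h1, indZ_neg h2, add_zero] at hne; exact absurd rfl hne
  have hdeg : ∀ u ∈ S, degSum a.arcs u + degSum b.arcs u = indZ (u = i) + indZ (u = j) := by
    intro u huS
    have huc : Conn a b i u := ((hSmem u).mp huS).1
    have hbd := conn_bound ⟨hi.1, hi.2.1⟩ huc
    by_cases hui : u = i <;> by_cases huj : u = j
    · subst hui
      rw [degSum_eq_zero a hi.2.2, degSum_eq_zero b (huj ▸ hj.2.2),
        indZ_pos rfl, indZ_pos huj]
      decide
    · subst hui
      have hbnr : ¬ b.IsRay u := fun h => hab.2 u j h hj huj hconn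
      have hb : degSum b.arcs u = 1 := by
        rcases ray_or_arc b hi.1 hi.2.1 with h | ⟨p, hp, hp'⟩
        · exact absurd h hbnr
        · exact degSum_eq_one b hp hp'
      rw [degSum_eq_zero a hi.2.2, hb, indZ_pos rfl, indZ_neg huj]
      decide
    · subst huj
      have hanr : ¬ a.IsRay u := fun h => hab.1 i u hi h (fun he => hui he.symm) huc
      have ha : degSum a.arcs u = 1 := by
        rcases ray_or_arc a hbd.1 hbd.2 with h | ⟨p, hp, hp'⟩
        · exact absurd h hanr
        · exact degSum_eq_one a hp hp'
      rw [ha, degSum_eq_zero b hj.2.2, indZ_neg hui, indZ_pos rfl]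
      decide
    · have hanr : ¬ a.IsRay u := fun h => hab.1 i u hi h (fun he => hui he.symm) huc
      have hbnr : ¬ b.IsRay u := fun h =>
        hab.2 u j h hj huj (conn_trans (conn_symm huc) hconn)
      have ha : degSum a.arcs u = 1 := by
        rcases ray_or_arc a hbd.1 hbd.2 with h | ⟨p, hp, hp'⟩
        · exact absurd h hanr
        · exact degSum_eq_one a hp hp'
      have hb : degSum b.arcs u = 1 := by
        rcases ray_or_arc b hbd.1 hbd.2 with h | ⟨p, hp, hp'⟩
        · exact absurd h hbnr
        · exact degSum_eq_one b hp hp'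
      rw [ha, hb, indZ_neg hui, indZ_neg huj]
      decide
  calc suF a b i v + sdF a b i v
      = (∑ u ∈ S, degSum (EaF a b i) u) + (∑ u ∈ S, degSum (EbF a b i) u) := by
        rw [hsu, hsd, sum_degSum, sum_degSum]
    _ = ∑ u ∈ S, (degSum a.arcs u + degSum b.arcs u) := by
        rw [Finset.sum_add_distrib]
        congr 1
        · exact Finset.sum_congr rfl hdegA
        · exact Finset.sum_congr rfl hdegB
    _ = ∑ u ∈ S, (indZ (u = i) + indZ (u = j)) := Finset.sum_congr rfl hdeg
    _ = indZ (i ∈ S) + indZ (j ∈ S) := by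
        rw [Finset.sum_add_distrib]
        congr 1
        · rw [← sum_indZ_eq S i]
          exact Finset.sum_congr rfl fun u _ => indZ_congr eq_comm
        · rw [← sum_indZ_eq S j]
          exact Finset.sum_congr rfl fun u _ => indZ_congr eq_comm
    _ = indZ (i < v) + indZ (j < v) := by
        congr 1
        · exact indZ_congr (by rw [hSmem]; exact ⟨And.right, fun h => ⟨Relation.ReflTransGen.refl, h⟩⟩)
        · exact indZ_congr (by rw [hSmem]; exact ⟨And.right, fun h => ⟨hconn, h⟩⟩)


/-- `s` rewritten via the `b`-side quantities, for `v` outside the component of `i`. -/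
lemma sF_alt {a b : NCMatching n k} (hab : InBa a b) {i j : ℕ}
    (hi : a.IsRay i) (hj : b.IsRay j) (hconn : Conn a b i j)
    {v : ℕ} (hv : ¬ Conn a b i v) :
    sF a b i v = sdF a b i v + indZ (j < v) := by
  unfold sF
  exact zmod2_swap _ _ _ _ (factB hab hi hj hconn hv)

/-- Step across an arc of `a` outside the component of `i`. -/
lemma stepA {a b : NCMatching n k} {i : ℕ} (hi : a.IsRay i)
    {p : ℕ × ℕ} (hp : p ∈ a.arcs) (hp1 : ¬ Conn a b i p.1) :
    sF a b i p.1 = sF a b i p.2 := by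
  have hp2 : ¬ Conn a b i p.2 := fun h => hp1 (conn_trans h (conn_symm (conn_of_mem_a hp)))
  unfold sF
  congr 1
  · refine Finset.sum_congr rfl fun r hr => ?_
    obtain ⟨hra, hrc⟩ := mem_EaF.mp hr
    have hne : r ≠ p := fun h => hp1 (h ▸ hrc)
    exact indZ_congr (span_iff a hra hp hne)
  · refine indZ_congr ?_
    have hnu := ray_not_under a hp hi
    have hne1 : p.1 ≠ i := fun h => hp1 (h ▸ Relation.ReflTransGen.refl)
    have hne2 : p.2 ≠ i := fun h => hp2 (h ▸ Relation.ReflTransGen.refl)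
    have := arc_lt a hp
    omega

/-- Step across an arc of `b` outside the component of `i`. -/
lemma stepB {a b : NCMatching n k} (hab : InBa a b) {i j : ℕ}
    (hi : a.IsRay i) (hj : b.IsRay j) (hconn : Conn a b i j)
    {p : ℕ × ℕ} (hp : p ∈ b.arcs) (hp1 : ¬ Conn a b i p.1) :
    sF a b i p.1 = sF a b i p.2 := by
  have hp2 : ¬ Conn a b i p.2 := fun h => hp1 (conn_trans h (conn_symm (conn_of_mem_b hp)))
  rw [sF_alt hab hi hj hconn hp1, sF_alt hab hi hj hconn hp2]
  congr 1
  · refine Finset.sum_congr rfl fun r hr => ?_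
    obtain ⟨hra, hrc⟩ := mem_EbF.mp hr
    have hne : r ≠ p := fun h => hp1 (h ▸ hrc)
    exact indZ_congr (span_iff b hra hp hne)
  · refine indZ_congr ?_
    have hnu := ray_not_under b hp hj
    have hne1 : p.1 ≠ j := fun h => hp1 (by rw [h]; exact hconn)
    have hne2 : p.2 ≠ j := fun h => hp2 (by rw [h]; exact hconn)
    have := arc_lt b hp
    omega

/-- `s` is constant on connected components that avoid the component of `i`. -/
lemma stepD {a b : NCMatching n k} (hab : InBa a b) {i j : ℕ}
    (hi : a.IsRay i) (hj : b.IsRay j) (hconn : Conn a b i j)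
    {v w : ℕ} (hvw : Conn a b v w) (hv : ¬ Conn a b i v) :
    sF a b i v = sF a b i w := by
  induction hvw with
  | refl => rfl
  | @tail c w hprev hstep ih =>
    have hc : ¬ Conn a b i c := fun h => hv (conn_trans h (conn_symm hprev))
    have hw : ¬ Conn a b i w :=
      fun h => hc (conn_trans h (Relation.ReflTransGen.single (glueRel_symm hstep)))
    rw [ih]
    rcases hstep with h | h | h | h
    · exact stepA hi h hc
    · exact (stepA hi h hw).symm
    · exact stepB hab hi hj hconn h hc
    · exact (stepB hab hi hj hconn h hw).symm

/-- The key separation lemma: two distinct segments cannot interleave. -/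
lemma key_side {a b : NCMatching n k} (hab : InBa a b) {i j : ℕ}
    (hi : a.IsRay i) (hj : b.IsRay j) (hconn : Conn a b i j)
    {i' j' : ℕ} (hi' : a.IsRay i') (hj' : b.IsRay j') (hconn' : Conn a b i' j')
    (hsep : ¬ Conn a b i i') : (i < i' ↔ j < j') := by
  have hnj' : ¬ Conn a b i j' := fun h => hsep (conn_trans h (conn_symm hconn'))
  have hsui' : suF a b i i' = 0 := Finset.sum_eq_zero fun r hr =>
    indZ_neg (ray_not_under a (mem_EaF.mp hr).1 hi')
  have hsdj' : sdF a b i j' = 0 := Finset.sum_eq_zero fun r hr =>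
    indZ_neg (ray_not_under b (mem_EbF.mp hr).1 hj')
  have e1 : sF a b i i' = indZ (i < i') := by
    unfold sF; rw [hsui', zero_add]
  have e2 : sF a b i j' = indZ (j < j') := by
    rw [sF_alt hab hi hj hconn hnj', hsdj', zero_add]
  have := stepD hab hi hj hconn hconn' hsep
  exact indZ_inj (by rw [← e1, this, e2])


end RayIdxAux

open RayIdxAux in
/-- If every line segment of `a w(b)` has endpoints pointing in opposite directions, then
rays glued into the same segment have the same left-to-right index: a ray of `a` at `i`
and a ray of `b` at `j` lying on the same component satisfy
`#{rays of a ≤ i} = #{rays of b ≤ j}`. -/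
theorem ray_indices_match (n k : ℕ) (a b : NCMatching n k) (hab : InBa a b)
    (i j : ℕ) (hi : a.IsRay i) (hj : b.IsRay j) (hconn : Conn a b i j) :
    {v : ℕ | a.IsRay v ∧ v ≤ i}.ncard = {v : ℕ | b.IsRay v ∧ v ≤ j}.ncard := by
  classical
  have huniq : ∀ v w w', b.IsRay w → b.IsRay w' → Conn a b v w → Conn a b v w' → w = w' := by
    intro v w w' hw hw' h1 h2
    by_contra hne
    exact hab.2 w w' hw hw' hne (conn_trans (conn_symm h1) h2)
  set F : ℕ → ℕ := fun v =>
    if h : a.IsRay v then Classical.choose (exists_partner hab h) else 0 with hF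
  have hFspec : ∀ v, (hv : a.IsRay v) → b.IsRay (F v) ∧ Conn a b v (F v) := by
    intro v hv
    simp only [hF, dif_pos hv]
    exact Classical.choose_spec (exists_partner hab hv)
  have hFi : F i = j := huniq i (F i) j (hFspec i hi).1 hj (hFspec i hi).2 hconn
  have hkey : ∀ v, a.IsRay v → v ≠ i → (i < v ↔ j < F v) := by
    intro v hv hne
    have hsep : ¬ Conn a b i v := hab.1 i v hi hv (fun h => hne h.symm)
    exact key_side hab hi hj hconn hv (hFspec v hv).1 (hFspec v hv).2 hsep
  have hbij : Set.BijOn F {v : ℕ | a.IsRay v ∧ v ≤ i} {v : ℕ | b.IsRay v ∧ v ≤ j} := by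
    refine ⟨?_, ?_, ?_⟩
    · rintro v ⟨hv, hvle⟩
      refine ⟨(hFspec v hv).1, ?_⟩
      by_cases hne : v = i
      · subst hne; rw [hFi]
      · have h1 := hkey v hv hne
        have h2 : ¬ i < v := by omega
        omega
    · rintro v ⟨hv, _⟩ w ⟨hw, _⟩ hvw
      by_contra hne
      refine hab.1 v w hv hw hne ?_
      exact conn_trans (hFspec v hv).2 (hvw ▸ conn_symm (hFspec w hw).2)
    · rintro w ⟨hw, hwle⟩
      obtain ⟨u, hu, hcu⟩ := exists_partner (inBa_swap hab) hw
      have hcuw : Conn a b u w := conn_symm (conn_swap hcu)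
      have hFu : F u = w := huniq u (F u) w (hFspec u hu).1 hw (hFspec u hu).2 hcuw
      refine ⟨u, ⟨hu, ?_⟩, hFu⟩
      by_cases hne : u = i
      · omega
      · have h1 := hkey u hu hne
        rw [hFu] at h1
        have hwj : w ≠ j := by
          intro h
          subst h
          exact hab.1 i u hi hu (fun he => hne he.symm)
            (conn_trans hconn (conn_symm hcuw))
        omega
  rw [← hbij.image_eq, Set.ncard_image_of_injOn hbij.injOn]
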